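/- For n ≥ 2, the number of allowable RG-words of length n with maximum letter n−1 equals ⌊n/2⌋·⌈n/2⌉. -/

import Mathlib

open scoped Classical

/-- The prefix maximum `max(w_1, …, w_{i-1})` (equal to `0` when `i` is the first index). -/
def pmax {n k : ℕ} (w : Fin n → Fin (k + 1)) (i : Fin n) : ℕ :=
  (Finset.univ.filter fun j => j < i).sup fun j => (w j : ℕ)

/-- `w` is a restricted growth word of length `n` with maximum letter `k`. -/
def IsRG {n k : ℕ} (w : Fin n → Fin (k + 1)) : Prop :=
  (∀ i, 1 ≤ (w i : ℕ)) ∧ (∀ i, (w i : ℕ) ≤ pmax w i + 1) ∧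
    (Finset.univ.sup fun i => (w i : ℕ)) = k

/-- An RG-word is allowable if every even letter appears exactly once. -/
def IsAllowable {n k : ℕ} (w : Fin n → Fin (k + 1)) : Prop :=
  ∀ j : ℕ, Even j → (Finset.univ.filter fun i => (w i : ℕ) = j).card ≤ 1

/-- `a(n,k)`, the number of allowable RG-words of length `n` with maximum letter `k`. -/
noncomputable def aCount (n k : ℕ) : ℕ :=
  (Finset.univ.filter fun w : Fin n → Fin (k + 1) => IsRG w ∧ IsAllowable w).card

namespace ACountAux

/-- value of the canonical word with parameters `b, v` at position `i` (all `ℕ`). -/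
def g (b v i : ℕ) : ℕ := if i < b then i + 1 else if i = b then v else i

/-- The canonical word with parameters `b, v`. -/
def fw (m b v : ℕ) (i : Fin (m + 1)) : Fin (m + 1) :=
  ⟨min (g b v i.val) m, Nat.lt_succ_of_le (min_le_right _ _)⟩

lemma fw_val {m b v : ℕ} (hb : b ≤ m) (hv : v ≤ b) (i : Fin (m + 1)) :
    (fw m b v i : ℕ) = g b v i.val := by
  have him : i.val < m + 1 := i.isLt
  have hg : g b v i.val ≤ m := by unfold g; split_ifs <;> omega
  simp [fw, Nat.min_eq_left hg]

lemma forward {m : ℕ} (hm : 1 ≤ m) (w : Fin (m + 1) → Fin (m + 1))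
    (hRG : IsRG w) (hA : IsAllowable w) :
    ∃ b v : ℕ, 1 ≤ b ∧ b ≤ m ∧ 1 ≤ v ∧ v ≤ b ∧ Odd v ∧
      ∀ i : Fin (m + 1), (w i : ℕ) = g b v i.val := by
  obtain ⟨h1, h2, h3⟩ := hRG
  -- every value is at most index + 1
  have wle : ∀ N : ℕ, ∀ i : Fin (m + 1), i.val = N → (w i : ℕ) ≤ i.val + 1 := by
    intro N
    induction N using Nat.strong_induction_on with
    | _ N ih =>
      intro i hiN
      have hp : pmax w i ≤ i.val := by
        apply Finset.sup_le
        intro j hj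
        simp only [Finset.mem_filter, Finset.mem_univ, true_and] at hj
        rw [Fin.lt_def] at hj
        have := ih j.val (by omega) j rfl
        omega
      have := h2 i
      omega
  -- every value between 1 and m is attained
  have attained : ∀ t : ℕ, 1 ≤ t → t ≤ m → ∃ i, (w i : ℕ) = t := by
    intro t ht1 htm
    have hex : ∃ i, t ≤ (w i : ℕ) := by
      by_contra hc
      push_neg at hc
      have : (Finset.univ.sup fun i => (w i : ℕ)) < t := by
        apply Finset.sup_lt_iff (by omega : (0:ℕ) < t) |>.mpr
        intro i _
        exact hc i
      omega
    obtain ⟨i0, hi0⟩ := hex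
    classical
    set S : Finset (Fin (m + 1)) := Finset.univ.filter (fun i => t ≤ (w i : ℕ)) with hS
    have hSne : S.Nonempty := ⟨i0, by simp [hS, hi0]⟩
    set j := S.min' hSne with hjdef
    have hj : t ≤ (w j : ℕ) := by
      have := S.min'_mem hSne
      simp only [hS, Finset.mem_filter, Finset.mem_univ, true_and] at this
      exact this
    have hpj : pmax w j + 1 ≤ t := by
      have hsle : pmax w j ≤ t - 1 := by
        apply Finset.sup_le
        intro l hl
        simp only [Finset.mem_filter, Finset.mem_univ, true_and] at hl
        by_contra hc
        push_neg at hc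
        have hlS : l ∈ S := by
          simp only [hS, Finset.mem_filter, Finset.mem_univ, true_and]
          omega
        have := S.min'_le l hlS
        rw [Fin.lt_def] at hl
        rw [Fin.le_def] at this
        omega
      omega
    have := h2 j
    exact ⟨j, by omega⟩
  -- values are at most m
  have wlem : ∀ i : Fin (m + 1), (w i : ℕ) ≤ m := by
    intro i
    calc (w i : ℕ) ≤ _ := Finset.le_sup (f := fun i => (w i : ℕ)) (Finset.mem_univ i)
      _ = m := h3
  -- definition of b : minimal index with w i ≤ i
  set T : Finset (Fin (m + 1)) := Finset.univ.filter (fun i => (w i : ℕ) ≤ i.val) with hT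
  have hTne : T.Nonempty := by
    refine ⟨Fin.last m, ?_⟩
    simp only [hT, Finset.mem_filter, Finset.mem_univ, true_and, Fin.val_last]
    exact wlem _
  set bIdx := T.min' hTne with hbIdx
  set b := (bIdx : ℕ) with hbdef
  have hbT : (w bIdx : ℕ) ≤ b := by
    have := T.min'_mem hTne
    simp only [hT, Finset.mem_filter, Finset.mem_univ, true_and] at this
    exact this
  have hb1 : 1 ≤ b := by
    rcases Nat.eq_zero_or_pos b with h0 | h
    · exfalso
      have := h1 bIdx
      omega
    · exact h
  have hbm : b ≤ m := by
    have := bIdx.isLt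
    omega
  -- prefix: w i = i + 1 for i < b
  have hpre : ∀ i : Fin (m + 1), i.val < b → (w i : ℕ) = i.val + 1 := by
    intro i hi
    have hnotT : ¬ ((w i : ℕ) ≤ i.val) := by
      intro hle
      have hiT : i ∈ T := by
        simp only [hT, Finset.mem_filter, Finset.mem_univ, true_and]; exact hle
      have := T.min'_le i hiT
      rw [Fin.le_def] at this
      omega
    have := wle i.val i rfl
    omega
  set v := (w bIdx : ℕ) with hvdef
  have hv1 : 1 ≤ v := h1 bIdx
  have hvb : v ≤ b := hbT
  -- fiber counting setup
  have hcardsum :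
      ∑ t ∈ Finset.Icc 1 m,
        (Finset.univ.filter (fun i : Fin (m + 1) => (w i : ℕ) = t)).card = m + 1 := by
    have hmap : ∀ x ∈ (Finset.univ : Finset (Fin (m + 1))), (w x : ℕ) ∈ Finset.Icc 1 m := by
      intro x _
      simp only [Finset.mem_Icc]
      exact ⟨h1 x, wlem x⟩
    have := Finset.card_eq_sum_card_fiberwise hmap
    simpa using this.symm
  have hfib1 : ∀ t ∈ Finset.Icc 1 m,
      1 ≤ (Finset.univ.filter (fun i : Fin (m + 1) => (w i : ℕ) = t)).card := by
    intro t ht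
    simp only [Finset.mem_Icc] at ht
    obtain ⟨i, hi⟩ := attained t ht.1 ht.2
    exact Finset.card_pos.mpr ⟨i, by simp [hi]⟩
  have hcard_le_sum : ∀ s : Finset ℕ, s ⊆ Finset.Icc 1 m →
      s.card ≤ ∑ t ∈ s, (Finset.univ.filter (fun i : Fin (m + 1) => (w i : ℕ) = t)).card := by
    intro s hs
    have := Finset.card_nsmul_le_sum s
      (fun t => (Finset.univ.filter (fun i : Fin (m + 1) => (w i : ℕ) = t)).card) 1
      (fun x hx => hfib1 x (hs hx))
    simpa using this
  -- the index v - 1 is a second occurrence of v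
  have haprev : (w ⟨v - 1, by omega⟩ : ℕ) = v := by
    have := hpre ⟨v - 1, by omega⟩ (by simpa using by omega)
    simp only at this
    omega
  -- fiber of v has at least 2 elements
  have hfv2 : 2 ≤ (Finset.univ.filter (fun i : Fin (m + 1) => (w i : ℕ) = v)).card := by
    have hsub : ({⟨v - 1, by omega⟩, bIdx} : Finset (Fin (m + 1))) ⊆
        Finset.univ.filter (fun i : Fin (m + 1) => (w i : ℕ) = v) := by
      intro x hx
      simp only [Finset.mem_insert, Finset.mem_singleton] at hx
      rcases hx with rfl | rfl
      · simp [haprev]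
      · simp [hvdef]
    have hcard2 : ({⟨v - 1, by omega⟩, bIdx} : Finset (Fin (m + 1))).card = 2 := by
      rw [Finset.card_insert_of_notMem, Finset.card_singleton]
      simp only [Finset.mem_singleton]
      intro hq
      have := congrArg Fin.val hq
      simp only at this
      omega
    calc (2:ℕ) = _ := hcard2.symm
      _ ≤ _ := Finset.card_le_card hsub
  have hvodd : Odd v := by
    rw [Nat.odd_iff]
    by_contra hc
    have heven : Even v := by rw [Nat.even_iff]; omega
    have := hA v heven
    omega
  -- suffix: w i = i for i > b
  have hsuf : ∀ N : ℕ, ∀ i : Fin (m + 1), i.val = N → b < i.val → (w i : ℕ) = i.val := by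
    intro N
    induction N using Nat.strong_induction_on with
    | _ N ih =>
      intro i hiN hbi
      have hpm : pmax w i ≤ i.val - 1 := by
        apply Finset.sup_le
        intro j hj
        simp only [Finset.mem_filter, Finset.mem_univ, true_and] at hj
        rw [Fin.lt_def] at hj
        rcases lt_trichotomy j.val b with hc | hc | hc
        · have := hpre j hc
          omega
        · have hjb : j = bIdx := Fin.ext (by omega)
          rw [hjb]
          omega
        · have := ih j.val (by omega) j rfl hc
          omega
      have hwle : (w i : ℕ) ≤ i.val := by
        have := h2 i
        omega
      by_contra hne
      have hti : (w i : ℕ) < i.val := by omega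
      set t := (w i : ℕ) with htdef
      have ht1 : 1 ≤ t := h1 i
      have htm : t ≤ m := wlem i
      -- a second occurrence of t at an index < i
      obtain ⟨j0, hj0lt, hj0val⟩ : ∃ j0 : Fin (m + 1), j0.val < i.val ∧ (w j0 : ℕ) = t := by
        rcases le_or_gt t b with hc | hc
        · refine ⟨⟨t - 1, by omega⟩, by simpa using by omega, ?_⟩
          have := hpre ⟨t - 1, by omega⟩ (by simpa using by omega)
          simp only at this ⊢
          omega
        · refine ⟨⟨t, by omega⟩, by simpa using by omega, ?_⟩
          have := ih t (by omega) ⟨t, by omega⟩ rfl (by simpa using hc)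
          simp only at this ⊢
          omega
      -- counting contradiction
      by_cases htv : t = v
      · -- fiber of v has ≥ 3 elements
        have hsub : ({⟨v - 1, by omega⟩, bIdx, i} : Finset (Fin (m + 1))) ⊆
            Finset.univ.filter (fun x : Fin (m + 1) => (w x : ℕ) = v) := by
          intro x hx
          simp only [Finset.mem_insert, Finset.mem_singleton] at hx
          rcases hx with rfl | rfl | rfl
          · simp [haprev]
          · simp [hvdef]
          · simp only [Finset.mem_filter, Finset.mem_univ, true_and]
            omega
        have hcard3 : ({⟨v - 1, by omega⟩, bIdx, i} : Finset (Fin (m + 1))).card = 3 := by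
          rw [Finset.card_insert_of_notMem, Finset.card_insert_of_notMem,
            Finset.card_singleton]
          · simp only [Finset.mem_singleton]
            intro hq
            have := congrArg Fin.val hq
            omega
          · simp only [Finset.mem_insert, Finset.mem_singleton]
            push_neg
            constructor
            · intro hq
              have := congrArg Fin.val hq
              simp only at this
              omega
            · intro hq
              have := congrArg Fin.val hq
              simp only [hbdef] at this
              omega
        have hfv3 : 3 ≤ (Finset.univ.filter (fun x : Fin (m + 1) => (w x : ℕ) = v)).card :=
          calc (3:ℕ) = _ := hcard3.symm
            _ ≤ _ := Finset.card_le_card hsub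
        have hvmem : v ∈ Finset.Icc 1 m := by simp only [Finset.mem_Icc]; omega
        have hsplit : (∑ t' ∈ (Finset.Icc 1 m).erase v,
              (Finset.univ.filter (fun i : Fin (m + 1) => (w i : ℕ) = t')).card) +
            (Finset.univ.filter (fun i : Fin (m + 1) => (w i : ℕ) = v)).card =
            ∑ t' ∈ Finset.Icc 1 m,
              (Finset.univ.filter (fun i : Fin (m + 1) => (w i : ℕ) = t')).card :=
          Finset.sum_erase_add (Finset.Icc 1 m) _ hvmem
        have hrest := hcard_le_sum ((Finset.Icc 1 m).erase v) (Finset.erase_subset _ _)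
        have hcarde : ((Finset.Icc 1 m).erase v).card = m - 1 := by
          rw [Finset.card_erase_of_mem hvmem, Nat.card_Icc]
          omega
        omega
      · -- fibers of t and v each have ≥ 2 elements
        have hsubt : ({j0, i} : Finset (Fin (m + 1))) ⊆
            Finset.univ.filter (fun x : Fin (m + 1) => (w x : ℕ) = t) := by
          intro x hx
          simp only [Finset.mem_insert, Finset.mem_singleton] at hx
          rcases hx with rfl | rfl
          · simp [hj0val]
          · simp only [Finset.mem_filter, Finset.mem_univ, true_and]
            exact htdef.symm
        have hcardt : ({j0, i} : Finset (Fin (m + 1))).card = 2 := by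
          rw [Finset.card_insert_of_notMem, Finset.card_singleton]
          simp only [Finset.mem_singleton]
          intro hq
          have := congrArg Fin.val hq
          omega
        have hft2 : 2 ≤ (Finset.univ.filter (fun x : Fin (m + 1) => (w x : ℕ) = t)).card :=
          calc (2:ℕ) = _ := hcardt.symm
            _ ≤ _ := Finset.card_le_card hsubt
        have hvmem : v ∈ Finset.Icc 1 m := by simp only [Finset.mem_Icc]; omega
        have htmem : t ∈ (Finset.Icc 1 m).erase v := by
          simp only [Finset.mem_erase, Finset.mem_Icc]
          exact ⟨htv, ht1, htm⟩
        have hsplit1 : (∑ t' ∈ (Finset.Icc 1 m).erase v,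
              (Finset.univ.filter (fun i : Fin (m + 1) => (w i : ℕ) = t')).card) +
            (Finset.univ.filter (fun i : Fin (m + 1) => (w i : ℕ) = v)).card =
            ∑ t' ∈ Finset.Icc 1 m,
              (Finset.univ.filter (fun i : Fin (m + 1) => (w i : ℕ) = t')).card :=
          Finset.sum_erase_add (Finset.Icc 1 m) _ hvmem
        have hsplit2 : (∑ t' ∈ ((Finset.Icc 1 m).erase v).erase t,
              (Finset.univ.filter (fun i : Fin (m + 1) => (w i : ℕ) = t')).card) +
            (Finset.univ.filter (fun i : Fin (m + 1) => (w i : ℕ) = t)).card =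
            ∑ t' ∈ (Finset.Icc 1 m).erase v,
              (Finset.univ.filter (fun i : Fin (m + 1) => (w i : ℕ) = t')).card :=
          Finset.sum_erase_add ((Finset.Icc 1 m).erase v) _ htmem
        have hrest := hcard_le_sum (((Finset.Icc 1 m).erase v).erase t)
          ((Finset.erase_subset _ _).trans (Finset.erase_subset _ _))
        have hcarde : (((Finset.Icc 1 m).erase v).erase t).card = m - 2 := by
          rw [Finset.card_erase_of_mem htmem, Finset.card_erase_of_mem hvmem, Nat.card_Icc]
          omega
        omega
  refine ⟨b, v, hb1, hbm, hv1, hvb, hvodd, ?_⟩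
  intro i
  unfold g
  rcases lt_trichotomy i.val b with hc | hc | hc
  · rw [if_pos hc]
    exact hpre i hc
  · rw [if_neg (by omega), if_pos hc]
    have : i = bIdx := Fin.ext (by omega)
    rw [this]
  · rw [if_neg (by omega), if_neg (by omega)]
    exact hsuf i.val i rfl hc

lemma backward {m b v : ℕ} (hm : 1 ≤ m) (hb1 : 1 ≤ b) (hbm : b ≤ m)
    (hv1 : 1 ≤ v) (hvb : v ≤ b) (hvo : Odd v) :
    IsRG (fw m b v) ∧ IsAllowable (fw m b v) := by
  refine ⟨⟨?_, ?_, ?_⟩, ?_⟩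
  · intro i
    rw [fw_val hbm hvb]
    unfold g
    split_ifs <;> omega
  · intro i
    rcases Nat.eq_zero_or_pos i.val with h0 | hpos
    · rw [fw_val hbm hvb, h0]
      have : g b v 0 = 1 := by unfold g; rw [if_pos (by omega)]
      omega
    · obtain ⟨jv, hjlt, hjm, hgj⟩ :
          ∃ jv : ℕ, jv < i.val ∧ jv < m + 1 ∧ g b v i.val ≤ g b v jv + 1 := by
        have hilt := i.isLt
        unfold g
        split_ifs with hc1 hc2
        · exact ⟨i.val - 1, by omega, by omega, by rw [if_pos (by omega)]; omega⟩
        · exact ⟨b - 1, by omega, by omega, by rw [if_pos (by omega)]; omega⟩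
        · by_cases hc3 : i.val = b + 1
          · exact ⟨b - 1, by omega, by omega, by rw [if_pos (by omega)]; omega⟩
          · exact ⟨i.val - 1, by omega, by omega,
              by rw [if_neg (by omega), if_neg (by omega)]; omega⟩
      have hmem : (⟨jv, hjm⟩ : Fin (m + 1)) ∈
          Finset.univ.filter (fun j : Fin (m + 1) => j < i) := by
        simp only [Finset.mem_filter, Finset.mem_univ, true_and]
        rw [Fin.lt_def]
        exact hjlt
      have hle : (fw m b v ⟨jv, hjm⟩ : ℕ) ≤ pmax (fw m b v) i :=
        Finset.le_sup (f := fun j => (fw m b v j : ℕ)) hmem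
      rw [fw_val hbm hvb] at hle
      rw [fw_val hbm hvb]
      simp only at hle
      omega
  · apply le_antisymm
    · apply Finset.sup_le
      intro i _
      rw [fw_val hbm hvb]
      have := i.isLt
      unfold g
      split_ifs <;> omega
    · by_cases hbm' : b = m
      · have hval : (fw m b v ⟨m - 1, by omega⟩ : ℕ) = m := by
          rw [fw_val hbm hvb]
          show g b v (m - 1) = m
          unfold g
          rw [if_pos (by omega)]
          omega
        calc m = _ := hval.symm
          _ ≤ _ := Finset.le_sup (f := fun i => (fw m b v i : ℕ)) (Finset.mem_univ _)
      · have hval : (fw m b v ⟨m, by omega⟩ : ℕ) = m := by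
          rw [fw_val hbm hvb]
          show g b v m = m
          unfold g
          rw [if_neg (by omega), if_neg (by omega)]
        calc m = _ := hval.symm
          _ ≤ _ := Finset.le_sup (f := fun i => (fw m b v i : ℕ)) (Finset.mem_univ _)
  · intro t ht
    rw [Finset.card_le_one]
    intro x hx y hy
    simp only [Finset.mem_filter, Finset.mem_univ, true_and] at hx hy
    rw [fw_val hbm hvb] at hx hy
    have hvo' := hvo
    rw [Nat.odd_iff] at hvo'
    rw [Nat.even_iff] at ht
    apply Fin.ext
    unfold g at hx hy
    split_ifs at hx hy <;> omega

lemma fw_inj {m b1 v1 b2 v2 : ℕ} (hbm1 : b1 ≤ m) (hv11 : 1 ≤ v1) (hvb1 : v1 ≤ b1)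
    (hbm2 : b2 ≤ m) (hv21 : 1 ≤ v2) (hvb2 : v2 ≤ b2)
    (h : fw m b1 v1 = fw m b2 v2) : b1 = b2 ∧ v1 = v2 := by
  have key : ∀ i : ℕ, i < m + 1 → g b1 v1 i = g b2 v2 i := by
    intro i hi
    have h0 := congrArg Fin.val (congrFun h ⟨i, hi⟩)
    rw [fw_val hbm1 hvb1, fw_val hbm2 hvb2] at h0
    exact h0
  have hb : b1 = b2 := by
    by_contra hne
    rcases lt_or_gt_of_ne hne with hlt | hlt
    · have hk := key b1 (by omega)
      unfold g at hk
      rw [if_neg (lt_irrefl b1), if_pos rfl, if_pos hlt] at hk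
      omega
    · have hk := key b2 (by omega)
      unfold g at hk
      rw [if_pos hlt, if_neg (lt_irrefl b2), if_pos rfl] at hk
      omega
  subst hb
  have hk := key b1 (by omega)
  unfold g at hk
  rw [if_neg (lt_irrefl b1), if_neg (lt_irrefl b1), if_pos rfl, if_pos rfl] at hk
  exact ⟨rfl, hk⟩

lemma sum_formula (m : ℕ) :
    ∑ b ∈ Finset.Icc 1 m, (b + 1) / 2 = (m + 1) / 2 * ((m + 2) / 2) := by
  induction m with
  | zero => simp
  | succ m ih =>
    rw [Finset.sum_Icc_succ_top (by omega), ih]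
    have h1 : (m + 1 + 2) / 2 = (m + 1) / 2 + 1 := by omega
    rw [h1]
    ring

lemma main {m : ℕ} (hm : 1 ≤ m) :
    (Finset.univ.filter fun w : Fin (m + 1) → Fin (m + 1) =>
        IsRG w ∧ IsAllowable w).card = (m + 1) / 2 * ((m + 2) / 2) := by
  classical
  set P : Finset ((_ : ℕ) × ℕ) :=
    (Finset.Icc 1 m).sigma (fun b => Finset.range ((b + 1) / 2)) with hP
  set F : ((_ : ℕ) × ℕ) → (Fin (m + 1) → Fin (m + 1)) :=
    fun p => fw m p.1 (2 * p.2 + 1) with hF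
  have hPmem : ∀ p : ((_ : ℕ) × ℕ), p ∈ P ↔
      (1 ≤ p.1 ∧ p.1 ≤ m ∧ 2 * p.2 + 1 ≤ p.1) := by
    intro p
    simp only [hP, Finset.mem_sigma, Finset.mem_Icc, Finset.mem_range]
    omega
  have himg : (Finset.univ.filter fun w : Fin (m + 1) → Fin (m + 1) =>
      IsRG w ∧ IsAllowable w) = P.image F := by
    ext w
    simp only [Finset.mem_filter, Finset.mem_univ, true_and, Finset.mem_image]
    constructor
    · rintro ⟨hRG, hA⟩
      obtain ⟨b, v, hb1, hbm, hv1, hvb, hvo, hw⟩ := forward hm w hRG hA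
      obtain ⟨u, hu⟩ := hvo
      refine ⟨⟨b, u⟩, (hPmem ⟨b, u⟩).2 ⟨hb1, hbm, show 2 * u + 1 ≤ b by omega⟩, ?_⟩
      show fw m b (2 * u + 1) = w
      funext i
      apply Fin.ext
      rw [fw_val hbm (by omega), hw i, hu]
    · rintro ⟨p, hp, rfl⟩
      obtain ⟨hp1, hp2, hp3⟩ := (hPmem p).1 hp
      exact backward hm (by omega) (by omega) (by omega) (by omega) ⟨p.2, by omega⟩
  rw [himg, Finset.card_image_of_injOn, hP, Finset.card_sigma]
  · simp only [Finset.card_range]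
    exact sum_formula m
  · intro p hp q hq hpq
    obtain ⟨hp1, hp2, hp3⟩ := (hPmem p).1 hp
    obtain ⟨hq1, hq2, hq3⟩ := (hPmem q).1 hq
    have hinj := fw_inj (m := m) (by omega) (by omega) (by omega) (by omega) (by omega)
      (by omega) hpq
    obtain ⟨pb, pu⟩ := p
    obtain ⟨qb, qu⟩ := q
    simp only at hinj hp1 hp2 hp3 hq1 hq2 hq3
    obtain ⟨h1', h2'⟩ := hinj
    subst h1'
    have : pu = qu := by omega
    subst this
    rfl

end ACountAux

theorem aCount_pred (n : ℕ) (hn : 2 ≤ n) :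
    aCount n (n - 1) = n / 2 * ((n + 1) / 2) := by
  obtain ⟨m, rfl⟩ : ∃ m, n = m + 1 := ⟨n - 1, by omega⟩
  have hm : 1 ≤ m := by omega
  show (Finset.univ.filter fun w : Fin (m + 1) → Fin (m + 1) =>
      IsRG w ∧ IsAllowable w).card = (m + 1) / 2 * ((m + 1 + 1) / 2)
  exact ACountAux.main hm
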